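/- Let E be a finite-dimensional vector space over a field F and let H be a collection of subspaces of E satisfying the hyperplane axioms (H1), (H2), (H3). Then the collection F_H of all intersections of subfamilies of H (the empty intersection being E) satisfies the flat axioms (F1), (F2), (F3). -/

import Mathlib

open Module

/-- `B` covers `A` in the collection `𝓐`: both belong to `𝓐`, `A ⊆ B`, and any
member of `𝓐` between them equals `A` or `B`. -/
def CoversIn {K E : Type*} [Field K] [AddCommGroup E] [Module K E]
    (𝓐 : Set (Submodule K E)) (A B : Submodule K E) : Prop :=
  A ∈ 𝓐 ∧ B ∈ 𝓐 ∧ A ≤ B ∧ ∀ C ∈ 𝓐, A ≤ C → C ≤ B → C = A ∨ C = B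

section Aux

variable {K E : Type*} [Field K] [AddCommGroup E] [Module K E] [FiniteDimensional K E]

/-- From non-inclusion extract a 1-dimensional subspace separating the two. -/
lemma exists_point_le_not_le {A B : Submodule K E} (h : ¬ A ≤ B) :
    ∃ p : Submodule K E, finrank K p = 1 ∧ p ≤ A ∧ ¬ p ≤ B := by
  rw [SetLike.not_le_iff_exists] at h
  obtain ⟨v, hvA, hvB⟩ := h
  refine ⟨Submodule.span K {v}, ?_, ?_, ?_⟩
  · exact finrank_span_singleton (fun h0 => hvB (h0 ▸ B.zero_mem))
  · exact Submodule.span_le.2 (Set.singleton_subset_iff.2 hvA)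
  · exact fun h' => hvB (h' (Submodule.mem_span_singleton_self v))

/-- Strong form of the hyperplane exchange axiom: the new hyperplane can be chosen
to avoid a prescribed point `f` lying in `H2` but not in `H1`.  Proved by
induction on the codimension of `H1 ⊓ H2` (analogous to strong circuit
elimination in matroid theory). -/
lemma strongH3 (𝓗 : Set (Submodule K E))
    (hH2ax : ∀ H1 H2 : Submodule K E, H1 ∈ 𝓗 → H2 ∈ 𝓗 → H1 ≤ H2 → H1 = H2)
    (hH3ax : ∀ H1 H2 : Submodule K E, H1 ∈ 𝓗 → H2 ∈ 𝓗 → H1 ≠ H2 →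
      ∀ x : Submodule K E, finrank K x = 1 → ∃ H3 ∈ 𝓗, (H1 ⊓ H2) ⊔ x ≤ H3) :
    ∀ d : ℕ, ∀ H1 H2 : Submodule K E,
      finrank K E - finrank K (H1 ⊓ H2 : Submodule K E) ≤ d →
      H1 ∈ 𝓗 → H2 ∈ 𝓗 → H1 ≠ H2 →
      ∀ e f : Submodule K E, finrank K e = 1 → finrank K f = 1 →
      ¬ e ≤ H1 → ¬ e ≤ H2 → ¬ f ≤ H1 → f ≤ H2 →
      ∃ H3 ∈ 𝓗, (H1 ⊓ H2) ⊔ e ≤ H3 ∧ ¬ f ≤ H3 := by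
  intro d
  induction d with
  | zero =>
    intro H1 H2 hmeas _ _ _ e f _ _ heH1 _ _ _
    -- the intersection would have full rank, forcing `H1 = ⊤`, contradiction
    have h1 : finrank K (H1 ⊓ H2 : Submodule K E) ≤ finrank K E := Submodule.finrank_le _
    have h2 : finrank K (H1 ⊓ H2 : Submodule K E) = finrank K E := by omega
    have htop : (H1 ⊓ H2 : Submodule K E) = ⊤ := Submodule.eq_top_of_finrank_eq h2
    exact absurd (le_trans le_top (htop ▸ inf_le_left : (⊤ : Submodule K E) ≤ H1)) heH1
  | succ d ih =>
    intro H1 H2 hmeas h1 h2 hne e f he hf heH1 heH2 hfH1 hfH2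
    obtain ⟨H3, h3, hle3⟩ := hH3ax H1 H2 h1 h2 hne e he
    by_cases hfH3 : f ≤ H3
    · -- hard case: repair using two applications of the inductive hypothesis
      have heH3 : e ≤ H3 := le_trans le_sup_right hle3
      have h12le3 : H1 ⊓ H2 ≤ H3 := le_trans le_sup_left hle3
      have hne13 : H1 ≠ H3 := fun h => heH1 (h ▸ heH3)
      have hnle13 : ¬ H1 ≤ H3 := fun h => hne13 (hH2ax _ _ h1 h3 h)
      obtain ⟨g, hg1, hgH1, hgH3⟩ := exists_point_le_not_le hnle13
      have hgH2 : ¬ g ≤ H2 := fun h => hgH3 (le_trans (le_inf hgH1 h) h12le3)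
      -- measure decrease for the pair (H2, H3)
      have hsub23 : H1 ⊓ H2 ≤ H2 ⊓ H3 := le_inf inf_le_right h12le3
      have hlt23 : (H1 ⊓ H2 : Submodule K E) < H2 ⊓ H3 :=
        lt_of_le_not_ge hsub23 (fun h => hfH1 (le_trans (le_trans (le_inf hfH2 hfH3) h) inf_le_left))
      have hr23 : finrank K (H2 ⊓ H3 : Submodule K E) ≤ finrank K E := Submodule.finrank_le _
      have hrlt23 : finrank K (H1 ⊓ H2 : Submodule K E) < finrank K (H2 ⊓ H3 : Submodule K E) :=
        Submodule.finrank_lt_finrank_of_lt hlt23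
      have hm23 : finrank K E - finrank K (H2 ⊓ H3 : Submodule K E) ≤ d := by omega
      have hne23 : H2 ≠ H3 := fun h => heH2 (h ▸ heH3)
      obtain ⟨H4, h4, hle4, heH4⟩ := ih H2 H3 hm23 h2 h3 hne23 g e hg1 he hgH2 hgH3 heH2 heH3
      -- now work with the pair (H1, H4)
      have h23le4 : H2 ⊓ H3 ≤ H4 := le_trans le_sup_left hle4
      have hgH4 : g ≤ H4 := le_trans le_sup_right hle4
      have hfH4 : f ≤ H4 := le_trans (le_inf hfH2 hfH3) h23le4
      have hsub14 : H1 ⊓ H2 ≤ H1 ⊓ H4 := le_inf inf_le_left (le_trans hsub23 h23le4)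
      have hlt14 : (H1 ⊓ H2 : Submodule K E) < H1 ⊓ H4 :=
        lt_of_le_not_ge hsub14 (fun h => hgH2 (le_trans (le_trans (le_inf hgH1 hgH4) h) inf_le_right))
      have hr14 : finrank K (H1 ⊓ H4 : Submodule K E) ≤ finrank K E := Submodule.finrank_le _
      have hrlt14 : finrank K (H1 ⊓ H2 : Submodule K E) < finrank K (H1 ⊓ H4 : Submodule K E) :=
        Submodule.finrank_lt_finrank_of_lt hlt14
      have hm14 : finrank K E - finrank K (H1 ⊓ H4 : Submodule K E) ≤ d := by omega
      have hne14 : H1 ≠ H4 := fun h => hfH1 (h ▸ hfH4)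
      obtain ⟨H5, h5, hle5, hfH5⟩ := ih H1 H4 hm14 h1 h4 hne14 e f he hf heH1 heH4 hfH1 hfH4
      exact ⟨H5, h5, le_trans (sup_le_sup_right hsub14 e) hle5, hfH5⟩
    · exact ⟨H3, h3, hle3, hfH3⟩

end Aux

theorem stmt17 {K E : Type*} [Field K] [AddCommGroup E] [Module K E] [FiniteDimensional K E]
    (𝓗 : Set (Submodule K E))
    (hH1 : ⊤ ∉ 𝓗)
    (hH2 : ∀ H1 H2 : Submodule K E, H1 ∈ 𝓗 → H2 ∈ 𝓗 → H1 ≤ H2 → H1 = H2)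
    (hH3 : ∀ H1 H2 : Submodule K E, H1 ∈ 𝓗 → H2 ∈ 𝓗 → H1 ≠ H2 →
      ∀ x : Submodule K E, finrank K x = 1 → ∃ H3 ∈ 𝓗, (H1 ⊓ H2) ⊔ x ≤ H3) :
    ((⊤ : Submodule K E) ∈ {A : Submodule K E | ∃ S ⊆ 𝓗, A = sInf S}) ∧
    (∀ F1 F2 : Submodule K E, F1 ∈ {A : Submodule K E | ∃ S ⊆ 𝓗, A = sInf S} →
      F2 ∈ {A : Submodule K E | ∃ S ⊆ 𝓗, A = sInf S} →
      F1 ⊓ F2 ∈ {A : Submodule K E | ∃ S ⊆ 𝓗, A = sInf S}) ∧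
    (∀ Fl ∈ {A : Submodule K E | ∃ S ⊆ 𝓗, A = sInf S}, ∀ x : Submodule K E,
      finrank K x = 1 → ¬ x ≤ Fl →
      ∃! G : Submodule K E,
        CoversIn {A : Submodule K E | ∃ S ⊆ 𝓗, A = sInf S} Fl G ∧ x ≤ G) := by
  refine ⟨⟨∅, Set.empty_subset _, sInf_empty.symm⟩, ?_, ?_⟩
  · rintro F1 F2 ⟨S1, hS1, rfl⟩ ⟨S2, hS2, rfl⟩
    exact ⟨S1 ∪ S2, Set.union_subset hS1 hS2, sInf_union.symm⟩
  · intro Fl hFl x hx1 hxFl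
    obtain ⟨S, hS𝓗, hFlS⟩ := hFl
    set Sx : Set (Submodule K E) := {H | H ∈ 𝓗 ∧ Fl ⊔ x ≤ H} with hSx
    set G : Submodule K E := sInf Sx with hG
    have hG𝓕 : G ∈ {A : Submodule K E | ∃ S ⊆ 𝓗, A = sInf S} :=
      ⟨Sx, fun H hH => hH.1, hG⟩
    have hxG : x ≤ G := le_sInf fun H hH => le_trans le_sup_right hH.2
    have hFlG : Fl ≤ G := le_sInf fun H hH => le_trans le_sup_left hH.2
    -- key exchange fact: any hyperplane through `Fl` and a point of `G` outside `Fl`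
    -- also contains `x`.
    have key : ∀ q : Submodule K E, finrank K q = 1 → q ≤ G → ¬ q ≤ Fl →
        ∀ H, H ∈ 𝓗 → Fl ≤ H → q ≤ H → x ≤ H := by
      intro q hq1 hqG hqFl H hH hFlH hqH
      by_contra hxH
      have hq' : ¬ q ≤ sInf S := hFlS ▸ hqFl
      rw [le_sInf_iff] at hq'
      push_neg at hq'
      obtain ⟨H0, hH0S, hqH0⟩ := hq'
      have hH0 : H0 ∈ 𝓗 := hS𝓗 hH0S
      have hFlH0 : Fl ≤ H0 := hFlS ▸ sInf_le hH0S
      have hxH0 : ¬ x ≤ H0 := fun h =>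
        hqH0 (le_trans hqG (sInf_le ⟨hH0, sup_le hFlH0 h⟩))
      have hne : H0 ≠ H := fun hEq => hqH0 (hEq ▸ hqH)
      obtain ⟨H3, h3, hle3, hqH3⟩ :=
        strongH3 𝓗 hH2 hH3 (finrank K E) H0 H (Nat.sub_le _ _) hH0 hH hne x q hx1 hq1
          hxH0 hxH hqH0 hqH
      have hH3Sx : H3 ∈ Sx :=
        ⟨h3, sup_le (le_trans (le_inf hFlH0 hFlH) (le_trans le_sup_left hle3))
          (le_trans le_sup_right hle3)⟩
      exact hqH3 (le_trans hqG (sInf_le hH3Sx))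
    refine ⟨G, ⟨⟨⟨S, hS𝓗, hFlS⟩, hG𝓕, hFlG, ?_⟩, hxG⟩, ?_⟩
    · -- cover property
      intro C hC hFlC hCG
      by_cases hCFl : C = Fl
      · exact Or.inl hCFl
      · right
        have hnle : ¬ C ≤ Fl := fun h => hCFl (le_antisymm h hFlC)
        obtain ⟨q, hq1, hqC, hqFl⟩ := exists_point_le_not_le hnle
        obtain ⟨T, hT𝓗, hCT⟩ := hC
        refine le_antisymm hCG ?_
        rw [hCT]
        refine le_sInf fun H hHT => ?_
        have hH : H ∈ 𝓗 := hT𝓗 hHT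
        have hCH : C ≤ H := hCT ▸ sInf_le hHT
        have hxH : x ≤ H :=
          key q hq1 (hqC.trans hCG) hqFl H hH (hFlC.trans hCH) (hqC.trans hCH)
        exact sInf_le ⟨hH, sup_le (hFlC.trans hCH) hxH⟩
    · -- uniqueness
      rintro G' ⟨⟨_, hG'𝓕, hFlG', hcov⟩, hxG'⟩
      obtain ⟨T', hT'𝓗, hG'T⟩ := hG'𝓕
      have hGG' : G ≤ G' := by
        rw [hG'T]
        refine le_sInf fun H hHT => ?_
        have hG'H : G' ≤ H := hG'T ▸ sInf_le hHT
        exact sInf_le ⟨hT'𝓗 hHT, sup_le (hFlG'.trans hG'H) (hxG'.trans hG'H)⟩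
      rcases hcov G hG𝓕 hFlG hGG' with h | h
      · exact absurd (h ▸ hxG) hxFl
      · exact h.symm
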